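/- Let F be a field and let I be an infinite set. Then every derivation of the algebra M_rcf(I,F) is inner: for every derivation d of M_rcf(I,F) there exists y ∈ M_rcf(I,F) such that d(a) = ya − ay for all a ∈ M_rcf(I,F). -/

import Mathlib

/-- The product of two `I × I` matrices, defined via `finsum`; it is well defined on
row-and-column-finite matrices. -/
noncomputable def matMul {F I : Type*} [Field F] (a b : Matrix I I F) : Matrix I I F :=
  fun i j => ∑ᶠ k, a i k * b k j

/-- A matrix has finitely many nonzero entries in each row and in each column. -/
def IsRcf {F I : Type*} [Field F] (a : Matrix I I F) : Prop :=
  (∀ i, {j | a i j ≠ 0}.Finite) ∧ (∀ j, {i | a i j ≠ 0}.Finite)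

namespace Stmt6

open scoped Classical

variable {F I : Type*} [Field F]

noncomputable def E (F : Type*) [Field F] {I : Type*} (p q : I) : Matrix I I F :=
  fun i j => if i = p ∧ j = q then 1 else 0

lemma E_apply (p q i j : I) : E F p q i j = if i = p ∧ j = q then 1 else 0 := rfl

lemma E_rcf (p q : I) : IsRcf (E F p q) := by
  constructor
  · intro i
    apply Set.Finite.subset (Set.finite_singleton q)
    intro j hj
    simp only [E_apply, Set.mem_setOf_eq, ne_eq, ite_eq_right_iff, not_forall] at hj
    simp [hj.1.2]
  · intro j
    apply Set.Finite.subset (Set.finite_singleton p)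
    intro i hi
    simp only [E_apply, Set.mem_setOf_eq, ne_eq, ite_eq_right_iff, not_forall] at hi
    simp [hi.1.1]

lemma matMul_E_left (p q : I) (a : Matrix I I F) (i j : I) :
    matMul (E F p q) a i j = if i = p then a q j else 0 := by
  unfold matMul
  rw [finsum_eq_single _ q]
  · by_cases h : i = p <;> simp [E_apply, h]
  · intro k hk
    simp [E_apply, hk]

lemma matMul_E_right (p q : I) (a : Matrix I I F) (i j : I) :
    matMul a (E F p q) i j = if j = q then a i p else 0 := by
  unfold matMul
  rw [finsum_eq_single _ p]
  · by_cases h : j = q <;> simp [E_apply, h]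
  · intro k hk
    simp only [E_apply]
    rw [if_neg (by tauto)]
    ring

lemma isRcf_mulE_left (p : I) (a : Matrix I I F) (ha : IsRcf a) :
    IsRcf (matMul (E F p p) a) := by
  constructor
  · intro i
    apply Set.Finite.subset (ha.1 p)
    intro j hj
    simp only [Set.mem_setOf_eq, matMul_E_left, ne_eq] at hj ⊢
    by_cases h : i = p
    · simpa [h] using hj
    · simp [h] at hj
  · intro j
    apply Set.Finite.subset (Set.finite_singleton p)
    intro i hi
    simp only [Set.mem_setOf_eq, matMul_E_left, ne_eq] at hi
    by_cases h : i = p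
    · simp [h]
    · simp [h] at hi

lemma isRcf_smul_E (c : F) (p q : I) : IsRcf (c • E F p q) := by
  constructor
  · intro i
    apply Set.Finite.subset (Set.finite_singleton q)
    intro j hj
    simp only [Set.mem_setOf_eq, ne_eq, Matrix.smul_apply, smul_eq_mul, E_apply, mul_ite,
      mul_one, mul_zero, ite_eq_right_iff, not_forall] at hj
    simp [hj.1.2]
  · intro j
    apply Set.Finite.subset (Set.finite_singleton p)
    intro i hi
    simp only [Set.mem_setOf_eq, ne_eq, Matrix.smul_apply, smul_eq_mul, E_apply, mul_ite,
      mul_one, mul_zero, ite_eq_right_iff, not_forall] at hi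
    simp [hi.1.1]

lemma mul_E_E (p r q : I) : matMul (E F p r) (E F r q) = E F p q := by
  funext i j
  rw [matMul_E_left]
  by_cases h : i = p <;> simp [E_apply, h]

lemma mul_EE_zero (p k : I) (h : p ≠ k) : matMul (E F p p) (E F k k) = 0 := by
  funext i j
  rw [matMul_E_left]
  by_cases hi : i = p <;> simp [E_apply, hi, h]

lemma matMul_add_E (x y : Matrix I I F) (q : I) :
    matMul (x + y) (E F q q) = matMul x (E F q q) + matMul y (E F q q) := by
  funext i j
  simp only [Matrix.add_apply, matMul_E_right]
  split <;> simp

lemma eaf_eq (p q : I) (a : Matrix I I F) :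
    matMul (matMul (E F p p) a) (E F q q) = a p q • E F p q := by
  funext i j
  simp only [matMul_E_right, matMul_E_left, Matrix.smul_apply, smul_eq_mul, E_apply]
  by_cases hi : i = p <;> by_cases hj : j = q <;> simp [hi, hj]

lemma matMul_eMul (p : I) (a b : Matrix I I F) (j : I) :
    matMul (matMul (E F p p) a) b p j = matMul a b p j := by
  show (∑ᶠ k, matMul (E F p p) a p k * b k j) = ∑ᶠ k, a p k * b k j
  exact finsum_congr fun k => by rw [matMul_E_left, if_pos rfl]

section D

variable (d : Matrix I I F → Matrix I I F)

lemma isRcf_zero : IsRcf (0 : Matrix I I F) := by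
  constructor <;> intro _ <;> simp

lemma d_zero (hadd : ∀ a b, IsRcf a → IsRcf b → d (a + b) = d a + d b) :
    d 0 = 0 := by
  have h := hadd 0 0 isRcf_zero isRcf_zero
  rw [add_zero] at h
  exact (left_eq_add.mp h)

variable (hmul : ∀ a b, IsRcf a → IsRcf b →
      d (matMul a b) = matMul (d a) b + matMul a (d b))

include hmul

lemma d_diag_diag (p : I) : d (E F p p) p p = 0 := by
  have h := hmul (E F p p) (E F p p) (E_rcf p p) (E_rcf p p)
  rw [mul_E_E] at h
  have h2 := congrFun (congrFun h p) p
  simp only [Matrix.add_apply, matMul_E_right, matMul_E_left, eq_self_iff_true, if_true] at h2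
  exact right_eq_add.mp h2

lemma d_swap (hadd : ∀ a b, IsRcf a → IsRcf b → d (a + b) = d a + d b)
    (p k : I) (h : p ≠ k) : d (E F p p) p k + d (E F k k) p k = 0 := by
  have h0 := hmul (E F p p) (E F k k) (E_rcf p p) (E_rcf k k)
  rw [mul_EE_zero p k h, d_zero d hadd] at h0
  have h2 := congrFun (congrFun h0.symm p) k
  simp only [Matrix.add_apply, matMul_E_right, matMul_E_left, eq_self_iff_true, if_true,
    Matrix.zero_apply] at h2
  exact h2

lemma d_c_split (p q o : I) :
    d (E F p q) p q = d (E F p o) p o + d (E F o q) o q := by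
  have h0 := hmul (E F p o) (E F o q) (E_rcf p o) (E_rcf o q)
  rw [mul_E_E] at h0
  have h2 := congrFun (congrFun h0 p) q
  simp only [Matrix.add_apply, matMul_E_right, matMul_E_left, eq_self_iff_true, if_true] at h2
  exact h2

lemma d_star (hsmul : ∀ (c : F) (a), IsRcf a → d (c • a) = c • d a)
    (a : Matrix I I F) (ha : IsRcf a) (p q : I) :
    a p q * d (E F p q) p q =
      matMul (d (E F p p)) a p q + d a p q + matMul a (d (E F q q)) p q := by
  have hea : IsRcf (matMul (E F p p) a) := isRcf_mulE_left p a ha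
  have key := hmul (matMul (E F p p) a) (E F q q) hea (E_rcf q q)
  rw [hmul (E F p p) a (E_rcf p p) ha, matMul_add_E, eaf_eq,
    hsmul (a p q) (E F p q) (E_rcf p q)] at key
  have h2 := congrFun (congrFun key p) q
  simp only [Matrix.smul_apply, smul_eq_mul, Matrix.add_apply, matMul_E_right,
    matMul_E_left, matMul_eMul, eq_self_iff_true, if_true] at h2
  exact h2

end D

end Stmt6

/-- Every derivation of the algebra `M_rcf(I,F)` is inner: there is
`y ∈ M_rcf(I,F)` with `d(a) = y*a - a*y` for all `a ∈ M_rcf(I,F)`. -/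
theorem stmt_6 (F I : Type*) [Field F] [Infinite I]
    (d : Matrix I I F → Matrix I I F)
    (hmap : ∀ a, IsRcf a → IsRcf (d a))
    (hadd : ∀ a b, IsRcf a → IsRcf b → d (a + b) = d a + d b)
    (hsmul : ∀ (c : F) (a), IsRcf a → d (c • a) = c • d a)
    (hmul : ∀ a b, IsRcf a → IsRcf b →
      d (matMul a b) = matMul (d a) b + matMul a (d b)) :
    ∃ y : Matrix I I F, IsRcf y ∧
      ∀ a, IsRcf a → d a = matMul y a - matMul a y := by
  classical
  obtain ⟨o⟩ : Nonempty I := inferInstance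
  obtain ⟨y, hydef⟩ : ∃ y : Matrix I I F, ∀ p k,
      y p k = if k = p then d (Stmt6.E F p o) p o else d (Stmt6.E F k k) p k :=
    ⟨_, fun p k => rfl⟩
  have hyrow : ∀ p, {k | y p k ≠ 0}.Finite := by
    intro p
    apply Set.Finite.subset (((hmap _ (Stmt6.E_rcf p p)).1 p).insert p)
    intro k hk
    simp only [Set.mem_setOf_eq] at hk
    rw [Set.mem_insert_iff]
    by_cases hkp : k = p
    · exact Or.inl hkp
    · right
      have h1 : y p k = d (Stmt6.E F k k) p k := by rw [hydef, if_neg hkp]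
      have h2 := Stmt6.d_swap d hmul hadd p k (fun h => hkp h.symm)
      have h3 : y p k = - d (Stmt6.E F p p) p k := by
        rw [h1]
        linear_combination h2
      simp only [Set.mem_setOf_eq]
      intro h0
      rw [h3, h0, neg_zero] at hk
      exact hk rfl
  have hycol : ∀ q, {i | y i q ≠ 0}.Finite := by
    intro q
    apply Set.Finite.subset (((hmap _ (Stmt6.E_rcf q q)).2 q).insert q)
    intro i hi
    simp only [Set.mem_setOf_eq] at hi
    rw [Set.mem_insert_iff]
    by_cases hiq : i = q
    · exact Or.inl hiq
    · right
      have h1 : y i q = d (Stmt6.E F q q) i q := by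
        rw [hydef, if_neg (fun h => hiq h.symm)]
      simp only [Set.mem_setOf_eq]
      rw [← h1]
      exact hi
  refine ⟨y, ⟨hyrow, hycol⟩, ?_⟩
  intro a ha
  funext p q
  have hδ : d (Stmt6.E F p q) p q
      = d (Stmt6.E F p o) p o - d (Stmt6.E F q o) q o := by
    have h1 := Stmt6.d_c_split d hmul p q o
    have h2 := Stmt6.d_c_split d hmul o o q
    have h3 := Stmt6.d_diag_diag d hmul o
    linear_combination h1 - h2 + h3
  have hfin1 : (Function.support fun k => y p k * a k q).Finite :=
    Set.Finite.subset (hyrow p) fun k hk => left_ne_zero_of_mul hk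
  have hfinE : (Function.support fun k => d (Stmt6.E F p p) p k * a k q).Finite :=
    Set.Finite.subset ((hmap _ (Stmt6.E_rcf p p)).1 p) fun k hk => left_ne_zero_of_mul hk
  have hS1 : matMul y a p q + matMul (d (Stmt6.E F p p)) a p q
      = a p q * d (Stmt6.E F p o) p o := by
    have hsum : (∑ᶠ k, (y p k * a k q + d (Stmt6.E F p p) p k * a k q))
        = matMul y a p q + matMul (d (Stmt6.E F p p)) a p q :=
      finsum_add_distrib hfin1 hfinE
    rw [← hsum]
    have hcongr : ∀ k, y p k * a k q + d (Stmt6.E F p p) p k * a k q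
        = if k = p then a p q * d (Stmt6.E F p o) p o else 0 := by
      intro k
      by_cases hkp : k = p
      · subst hkp
        rw [if_pos rfl, hydef, if_pos rfl, Stmt6.d_diag_diag d hmul k]
        ring
      · rw [if_neg hkp, hydef, if_neg hkp]
        have h2 := Stmt6.d_swap d hmul hadd p k (fun h => hkp h.symm)
        linear_combination a k q * h2
    rw [finsum_congr hcongr, finsum_eq_single _ p (fun x hx => if_neg hx), if_pos rfl]
  have hfin3 : (Function.support fun k => a p k * d (Stmt6.E F q q) k q).Finite :=
    Set.Finite.subset (ha.1 p) fun k hk => left_ne_zero_of_mul hk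
  have hind : (Function.support fun k =>
      if k = q then a p q * d (Stmt6.E F q o) q o else 0).Finite := by
    apply Set.Finite.subset (Set.finite_singleton q)
    intro k hk
    by_cases hkq : k = q
    · exact hkq
    · exact absurd (if_neg hkq) hk
  have hS2 : matMul a y p q
      = a p q * d (Stmt6.E F q o) q o + matMul a (d (Stmt6.E F q q)) p q := by
    have hcongr : ∀ k, a p k * y k q
        = (if k = q then a p q * d (Stmt6.E F q o) q o else 0)
          + a p k * d (Stmt6.E F q q) k q := by
      intro k
      by_cases hkq : k = q
      · subst hkq
        rw [if_pos rfl, hydef, if_pos rfl, Stmt6.d_diag_diag d hmul k]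
        ring
      · rw [if_neg hkq, hydef, if_neg (fun h => hkq h.symm)]
        ring
    calc matMul a y p q
        = ∑ᶠ k, ((if k = q then a p q * d (Stmt6.E F q o) q o else 0)
            + a p k * d (Stmt6.E F q q) k q) := finsum_congr hcongr
      _ = (∑ᶠ k, if k = q then a p q * d (Stmt6.E F q o) q o else 0)
            + ∑ᶠ k, a p k * d (Stmt6.E F q q) k q := finsum_add_distrib hind hfin3
      _ = a p q * d (Stmt6.E F q o) q o + matMul a (d (Stmt6.E F q q)) p q := by
          rw [finsum_eq_single _ q (fun x hx => if_neg hx), if_pos rfl]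
          rfl
  have hstar := Stmt6.d_star d hmul hsmul a ha p q
  rw [Matrix.sub_apply]
  linear_combination -hstar - hS1 + hS2 + a p q * hδ
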